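/- The counting function ζ(m,4) of 4-deviation sets satisfies ζ(m,4) = (((5+√5)/2)^⌊(m+1)/2⌋ + ((5−√5)/2)^⌊(m+1)/2⌋)/5 for all m ≥ 1. -/

import Mathlib

def IsDevSet (m δ : ℕ) (α : List ℕ) : Prop :=
  (∀ a ∈ α, 0 < a) ∧ α.sum = m ∧
  |∑ i ∈ Finset.range α.length, (-1 : ℤ) ^ i * (α.getD i 0 : ℤ)| ≤ 1 ∧
  ∀ k : ℕ, |∑ i ∈ Finset.range k, (-1 : ℤ) ^ i * (α.getD i 0 : ℤ)| ≤ (δ : ℤ)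

noncomputable def zeta (m δ : ℕ) : ℕ := Nat.card {α : List ℕ // IsDevSet m δ α}

/-- partial alternating sums -/
def Spart (α : List ℕ) (k : ℕ) : ℤ :=
  ∑ i ∈ Finset.range k, (-1 : ℤ) ^ i * (α.getD i 0 : ℤ)

lemma Spart_nil (k : ℕ) : Spart [] k = 0 := by
  simp [Spart]

lemma Spart_zero (α : List ℕ) : Spart α 0 = 0 := by simp [Spart]

lemma Spart_cons_succ (a : ℕ) (l : List ℕ) (k : ℕ) :
    Spart (a :: l) (k + 1) = a - Spart l k := by
  unfold Spart
  rw [Finset.sum_range_succ']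
  simp only [List.getD_cons_succ, List.getD_cons_zero, pow_succ, pow_zero, one_mul]
  rw [Finset.sum_congr rfl (fun i _ => show (-1:ℤ) ^ i * -1 * (l.getD i 0 : ℤ) = -((-1)^i * (l.getD i 0 : ℤ)) by ring)]
  rw [Finset.sum_neg_distrib]
  ring

/-- states-based deviation predicate -/
def Dev : ℕ → ℤ → List ℕ → Prop
  | m, t, [] => m = 0 ∧ t.natAbs ≤ 1
  | m, t, a :: l => 0 < a ∧ a ≤ m ∧ t.natAbs ≤ 4 ∧ Dev (m - a) (-t - a) l

lemma dev_iff (α : List ℕ) : ∀ (m : ℕ) (t : ℤ), Dev m t α ↔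
    ((∀ a ∈ α, 0 < a) ∧ α.sum = m ∧ (t + Spart α α.length).natAbs ≤ 1 ∧
      ∀ k, (t + Spart α k).natAbs ≤ 4) := by
  induction α with
  | nil =>
    intro m t
    simp only [Dev, Spart_nil, List.sum_nil, List.length_nil, add_zero, List.not_mem_nil]
    constructor
    · rintro ⟨rfl, h⟩; exact ⟨by simp, rfl, h, fun k => by omega⟩
    · rintro ⟨-, h1, h2, -⟩; exact ⟨h1.symm, h2⟩
  | cons a l IH =>
    intro m t
    simp only [Dev, List.sum_cons, List.length_cons, Spart_cons_succ, List.mem_cons]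
    rw [IH]
    constructor
    · rintro ⟨h1, h2, h3, h4, h5, h6, h7⟩
      refine ⟨?_, by omega, ?_, ?_⟩
      · rintro b (rfl | hb); · exact h1
        · exact h4 b hb
      · have : t + (a - Spart l l.length) = -(-t - a + Spart l l.length) := by ring
        rw [this, Int.natAbs_neg]; exact h6
      · intro k
        cases k with
        | zero => simpa [Spart_zero] using h3
        | succ k =>
          rw [Spart_cons_succ]
          have : t + (a - Spart l k) = -(-t - a + Spart l k) := by ring
          rw [this, Int.natAbs_neg]; exact h7 k
    · rintro ⟨h1, h2, h3, h4⟩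
      have ha : 0 < a := h1 a (Or.inl rfl)
      have ht : t.natAbs ≤ 4 := by simpa [Spart_zero] using h4 0
      refine ⟨ha, by omega, ht, fun b hb => h1 b (Or.inr hb), by omega, ?_, ?_⟩
      · have : -t - a + Spart l l.length = -(t + (a - Spart l l.length)) := by ring
        rw [this, Int.natAbs_neg]; exact h3
      · intro k
        have : -t - a + Spart l k = -(t + (a - Spart l k)) := by ring
        rw [this, Int.natAbs_neg]
        have := h4 (k + 1)
        rwa [Spart_cons_succ] at this

def Ncount : ℕ → ℤ → ℕ
  | 0, t => if t.natAbs ≤ 1 then 1 else 0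
  | (m+1), t =>
      if t.natAbs ≤ 4 then ∑ a ∈ Finset.range (m+1), Ncount (m - a) (-t - a - 1) else 0
termination_by m _ => m
decreasing_by omega

lemma dev_zero_iff (t : ℤ) (α : List ℕ) : Dev 0 t α ↔ α = [] ∧ t.natAbs ≤ 1 := by
  cases α with
  | nil => simp [Dev]
  | cons a l => simp only [Dev]; constructor
                · rintro ⟨h1, h2, -⟩; omega
                · rintro ⟨h, -⟩; exact absurd h (by simp)

lemma card_dev : ∀ (m : ℕ) (t : ℤ),
    Finite {α : List ℕ // Dev m t α} ∧ Nat.card {α : List ℕ // Dev m t α} = Ncount m t := by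
  intro m
  induction m using Nat.strong_induction_on with
  | _ m IH =>
    intro t
    match m with
    | 0 =>
      by_cases ht : t.natAbs ≤ 1
      · haveI : Unique {α : List ℕ // Dev 0 t α} := by
          refine ⟨⟨⟨[], ?_⟩⟩, ?_⟩
          · exact (dev_zero_iff t []).mpr ⟨rfl, ht⟩
          · rintro ⟨α, h⟩
            have := (dev_zero_iff t α).mp h
            exact Subtype.ext this.1
        constructor
        · infer_instance
        · rw [Nat.card_unique]
          simp [Ncount, ht]
      · haveI : IsEmpty {α : List ℕ // Dev 0 t α} := by
          refine ⟨fun ⟨α, h⟩ => ?_⟩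
          exact ht ((dev_zero_iff t α).mp h).2
        constructor
        · infer_instance
        · rw [Nat.card_of_isEmpty]
          simp [Ncount, ht]
    | (m+1) =>
      by_cases ht : t.natAbs ≤ 4
      · -- bijection with sigma type
        set Fib : Fin (m+1) → Type := fun a => {l : List ℕ // Dev (m - a) (-t - a - 1) l} with hFib
        have hfin : ∀ a : Fin (m+1), Finite (Fib a) := fun a => (IH (m - a) (by omega) _).1
        have hcard : ∀ a : Fin (m+1), Nat.card (Fib a) = Ncount (m - a) (-t - a - 1) :=
          fun a => (IH (m - a) (by omega) _).2
        have hpf : ∀ (x : Σ a : Fin (m+1), Fib a), Dev (m+1) t (((x.1 : ℕ) + 1) :: x.2.val) := by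
          rintro ⟨a, l, hl⟩
          refine ⟨by omega, by have := a.isLt; omega, ht, ?_⟩
          have e1 : m + 1 - ((a : ℕ) + 1) = m - a := by omega
          have e2 : -t - (((a : ℕ) + 1 : ℕ) : ℤ) = -t - a - 1 := by push_cast; ring
          rw [e1, e2]
          exact hl
        set F : (Σ a : Fin (m+1), Fib a) → {α : List ℕ // Dev (m+1) t α} :=
          fun x => ⟨((x.1 : ℕ) + 1) :: x.2.val, hpf x⟩ with hFdef
        have hFval : ∀ x, (F x).val = ((x.1 : ℕ) + 1) :: x.2.val := fun _ => rfl
        have hF : Function.Bijective F := by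
          constructor
          · rintro ⟨a, l, hl⟩ ⟨b, k, hk⟩ h
            have h' := congrArg Subtype.val h
            rw [hFval, hFval] at h'
            simp only [List.cons.injEq] at h'
            obtain ⟨h1, h2⟩ := h'
            have hab : a = b := Fin.ext (by omega)
            subst hab
            have hlk : l = k := h2
            subst hlk
            rfl
          · rintro ⟨α, h⟩
            cases α with
            | nil => exact absurd h (by simp [Dev])
            | cons a l =>
              obtain ⟨h1, h2, h3, h4⟩ := h
              refine ⟨⟨⟨a - 1, by omega⟩, ⟨l, ?_⟩⟩, ?_⟩
              · have e1 : m - (a - 1) = m + 1 - a := by omega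
                have e2 : -t - ((a - 1 : ℕ) : ℤ) - 1 = -t - (a : ℤ) := by
                  have : ((a - 1 : ℕ) : ℤ) = (a : ℤ) - 1 := by omega
                  rw [this]; ring
                rw [show ((⟨a - 1, by omega⟩ : Fin (m+1)) : ℕ) = a - 1 from rfl, e1, e2]
                exact h4
              · apply Subtype.ext
                rw [hFval]
                simp only [List.cons.injEq]
                exact ⟨by omega, trivial⟩
        haveI : Finite (Σ a : Fin (m+1), Fib a) := by
          haveI := hfin; infer_instance
        haveI : Finite {α : List ℕ // Dev (m+1) t α} := Finite.of_equiv _ (Equiv.ofBijective F hF)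
        refine ⟨inferInstance, ?_⟩
        rw [← Nat.card_congr (Equiv.ofBijective F hF)]
        haveI : ∀ a : Fin (m+1), Fintype (Fib a) := fun a => @Fintype.ofFinite _ (hfin a)
        rw [Nat.card_eq_fintype_card, Fintype.card_sigma]
        have hcc : ∀ a : Fin (m+1), Fintype.card (Fib a) = Ncount (m - a) (-t - a - 1) := by
          intro a
          rw [← Nat.card_eq_fintype_card, hcard]
        rw [Finset.sum_congr rfl (fun a _ => hcc a)]
        rw [show (Ncount (m+1) t) = ∑ a ∈ Finset.range (m+1), Ncount (m - a) (-t - a - 1) by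
          simp only [Ncount, if_pos ht]]
        exact Fin.sum_univ_eq_sum_range (fun a => Ncount (m - a) (-t - a - 1)) (m+1)
      · haveI : IsEmpty {α : List ℕ // Dev (m+1) t α} := by
          refine ⟨fun ⟨α, h⟩ => ?_⟩
          cases α with
          | nil => exact absurd h.1 (by omega)
          | cons a l => exact ht h.2.2.1
        refine ⟨inferInstance, ?_⟩
        rw [Nat.card_of_isEmpty]
        simp [Ncount, ht]

lemma Ncount_far (m : ℕ) (t : ℤ) (h : 4 < t.natAbs) : Ncount m t = 0 := by
  cases m with
  | zero => simp only [Ncount]; rw [if_neg (by omega)]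
  | succ m => simp only [Ncount]; rw [if_neg (by omega)]

lemma Ncount_step (m : ℕ) (t : ℤ) (ht : t.natAbs ≤ 4) :
    Ncount (m + 2) t = Ncount (m + 1) (-t - 1) + Ncount (m + 1) (t + 1) := by
  have h1 : Ncount (m + 2) t = ∑ a ∈ Finset.range (m + 2), Ncount (m + 1 - a) (-t - a - 1) := by
    simp only [Ncount, if_pos ht]
  rw [h1, Finset.sum_range_succ']
  have h0 : Ncount (m + 1 - 0) (-t - ((0 : ℕ) : ℤ) - 1) = Ncount (m + 1) (-t - 1) := by
    norm_num
  rw [h0, add_comm]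
  congr 1
  have hterm : ∀ a ∈ Finset.range (m + 1),
      Ncount (m + 1 - (a + 1)) (-t - ((a + 1 : ℕ) : ℤ) - 1)
        = Ncount (m - a) (-(t + 1) - a - 1) := by
    intro a _
    congr 1
    · omega
    · push_cast; ring
  rw [Finset.sum_congr rfl hterm]
  by_cases h2 : (t + 1).natAbs ≤ 4
  · rw [show Ncount (m + 1) (t + 1) = ∑ a ∈ Finset.range (m + 1), Ncount (m - a) (-(t+1) - a - 1) by
      simp only [Ncount, if_pos h2]]
  · rw [Ncount_far (m + 1) (t + 1) (by omega)]
    apply Finset.sum_eq_zero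
    intro a _
    apply Ncount_far
    omega

def Wcount : ℕ → ℤ → ℕ
  | 0, t => if t.natAbs ≤ 1 then 1 else 0
  | 1, t => if t.natAbs ≤ 4 ∧ (t + 1).natAbs ≤ 1 then 1 else 0
  | (m+2), t => if t.natAbs ≤ 4 then Wcount (m+1) (-t - 1) + Wcount (m+1) (t + 1) else 0

lemma Wcount_far (m : ℕ) (t : ℤ) (h : 4 < t.natAbs) : Wcount m t = 0 := by
  match m with
  | 0 => simp only [Wcount]; rw [if_neg (by omega)]
  | 1 => simp only [Wcount]; rw [if_neg (by omega)]
  | (m+2) => simp only [Wcount]; rw [if_neg (by omega)]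

lemma Wcount_step (m : ℕ) (t : ℤ) (ht : t.natAbs ≤ 4) :
    Wcount (m + 2) t = Wcount (m+1) (-t - 1) + Wcount (m+1) (t + 1) := by
  simp only [Wcount]; rw [if_pos ht]

lemma N_eq_W : ∀ (m : ℕ) (t : ℤ), Ncount m t = Wcount m t := by
  intro m
  induction m using Nat.strong_induction_on with
  | _ m IH =>
    intro t
    match m with
    | 0 => simp only [Ncount, Wcount]
    | 1 =>
      have e : (-t - 1).natAbs = (t + 1).natAbs := by omega
      have h1 : Ncount 1 t = if t.natAbs ≤ 4 then Ncount 0 (-t - 1) else 0 := by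
        simp only [Ncount]
        congr 1
        rw [Finset.sum_range_one]
        norm_num
        simp only [Ncount]
      rw [h1]
      simp only [Ncount, Wcount, e]
      by_cases h2 : t.natAbs ≤ 4 <;> by_cases h3 : (t+1).natAbs ≤ 1 <;>
        simp [h2, h3]
    | (m+2) =>
      by_cases ht : t.natAbs ≤ 4
      · rw [Ncount_step m t ht, Wcount_step m t ht, IH (m+1) (by omega), IH (m+1) (by omega)]
      · simp only [Ncount, Wcount]
        rw [if_neg ht, if_neg ht]

lemma Wcount_rec (m : ℕ) : ∀ t : ℤ, Wcount (m + 6) t + 5 * Wcount (m + 2) t = 5 * Wcount (m + 4) t := by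
  induction m with
  | zero =>
    intro t
    by_cases ht : t.natAbs ≤ 4
    · have hb : -4 ≤ t ∧ t ≤ 4 := by omega
      obtain ⟨hb1, hb2⟩ := hb
      interval_cases t <;> decide
    · rw [Wcount_far _ _ (by omega), Wcount_far _ _ (by omega), Wcount_far _ _ (by omega)]
  | succ m IH =>
    intro t
    by_cases ht : t.natAbs ≤ 4
    · rw [show m + 1 + 6 = m + 5 + 2 by omega, show m + 1 + 4 = m + 3 + 2 by omega,
        show m + 1 + 2 = m + 1 + 2 by omega]
      rw [Wcount_step _ _ ht, Wcount_step _ _ ht, Wcount_step _ _ ht]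
      simp only [show m + 5 + 1 = m + 6 from by omega, show m + 3 + 1 = m + 4 from by omega,
        show m + 1 + 1 = m + 2 from by omega]
      have g1 := IH (-t - 1)
      have g2 := IH (t + 1)
      omega
    · rw [Wcount_far _ _ (by omega), Wcount_far _ _ (by omega), Wcount_far _ _ (by omega)]

lemma zeta_eq_W (m : ℕ) : zeta m 4 = Wcount m 0 := by
  have key : ∀ α : List ℕ, IsDevSet m 4 α ↔ Dev m 0 α := by
    intro α
    rw [dev_iff]
    unfold IsDevSet
    have hSp : ∀ k, (∑ i ∈ Finset.range k, (-1:ℤ) ^ i * (α.getD i 0 : ℤ)) = Spart α k :=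
      fun _ => rfl
    simp only [hSp]
    constructor
    · rintro ⟨h1, h2, h3, h4⟩
      refine ⟨h1, h2, ?_, fun k => ?_⟩
      · rw [zero_add]
        have h3' : -1 ≤ Spart α α.length ∧ Spart α α.length ≤ 1 := abs_le.mp h3
        omega
      · rw [zero_add]
        have h4' : -((4:ℕ):ℤ) ≤ Spart α k ∧ Spart α k ≤ ((4:ℕ):ℤ) := abs_le.mp (h4 k)
        omega
    · rintro ⟨h1, h2, h3, h4⟩
      rw [zero_add] at h3
      refine ⟨h1, h2, abs_le.mpr (by omega), fun k => abs_le.mpr ?_⟩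
      have := h4 k
      rw [zero_add] at this
      constructor <;> [skip; skip] <;> omega
  rw [zeta, Nat.card_congr (Equiv.subtypeEquivRight key), (card_dev m 0).2, N_eq_W]

lemma W_closed : ∀ m : ℕ, 1 ≤ m → (Wcount m 0 : ℝ) =
    (((5 + Real.sqrt 5) / 2) ^ ((m + 1) / 2) +
        ((5 - Real.sqrt 5) / 2) ^ ((m + 1) / 2)) / 5 := by
  have hs : Real.sqrt 5 ^ 2 = 5 := Real.sq_sqrt (by norm_num)
  have hA : ((5 + Real.sqrt 5) / 2) ^ 2 = 5 * ((5 + Real.sqrt 5) / 2) - 5 := by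
    linear_combination hs / 4
  have hB : ((5 - Real.sqrt 5) / 2) ^ 2 = 5 * ((5 - Real.sqrt 5) / 2) - 5 := by
    linear_combination hs / 4
  intro m
  induction m using Nat.strong_induction_on with
  | _ m IH =>
    intro hm
    by_cases hsmall : m < 6
    · interval_cases m
      · rw [show Wcount 1 0 = 1 from by decide, show (1+1)/2 = 1 from by norm_num]
        field_simp
        push_cast; ring
      · rw [show Wcount 2 0 = 1 from by decide, show (2+1)/2 = 1 from by norm_num]
        field_simp
        push_cast; ring
      · rw [show Wcount 3 0 = 3 from by decide, show (3+1)/2 = 2 from by norm_num]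
        push_cast
        linear_combination (-1/10 : ℝ) * hs
      · rw [show Wcount 4 0 = 3 from by decide, show (4+1)/2 = 2 from by norm_num]
        push_cast
        linear_combination (-1/10 : ℝ) * hs
      · rw [show Wcount 5 0 = 10 from by decide, show (5+1)/2 = 3 from by norm_num]
        push_cast
        linear_combination (-3/4 : ℝ) * hs
    · push_neg at hsmall
      have hrec := Wcount_rec (m - 6) 0
      rw [show m - 6 + 6 = m from by omega, show m - 6 + 2 = m - 4 from by omega,
        show m - 6 + 4 = m - 2 from by omega] at hrec
      have hcast : (Wcount m 0 : ℝ) = 5 * (Wcount (m - 2) 0 : ℝ) - 5 * (Wcount (m - 4) 0 : ℝ) := by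
        have := congrArg (fun n : ℕ => (n : ℝ)) hrec
        push_cast at this
        linarith
      have ih2 := IH (m - 2) (by omega) (by omega)
      have ih4 := IH (m - 4) (by omega) (by omega)
      set k := (m - 4 + 1) / 2 with hk
      have e2 : (m - 2 + 1) / 2 = k + 1 := by omega
      have e0 : (m + 1) / 2 = k + 2 := by omega
      rw [hcast, ih2, ih4, e2, e0]
      linear_combination (-(((5 + Real.sqrt 5) / 2) ^ k) / 5) * hA +
        (-(((5 - Real.sqrt 5) / 2) ^ k) / 5) * hB

theorem zeta_four (m : ℕ) (hm : 1 ≤ m) :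
    (zeta m 4 : ℝ) =
      (((5 + Real.sqrt 5) / 2) ^ ((m + 1) / 2) +
        ((5 - Real.sqrt 5) / 2) ^ ((m + 1) / 2)) / 5 := by
  rw [zeta_eq_W m]
  exact W_closed m hm
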